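/- Let A ⊆ ℝ² be a finite set with distinct pairwise distances, and let e_1 ≤ e_2 ≤ … ≤ e_{n−1} be the edge lengths of its Euclidean minimum spanning tree. For r ≥ 0, the number of connected components of the graph on A with edges {a,b} of length ‖a−b‖ ≤ 2r equals n minus the number of MST edges of length at most 2r. Hence the sum over all components-merging events of the merge radii equals half the total length of the MST. -/

import Mathlib

open scoped Classical

noncomputable section

/-- Points of the Euclidean plane. -/
abbrev Pt := EuclideanSpace ℝ (Fin 2)

/-- The Euclidean length of a potential edge on points of `S`. -/
noncomputable def edgeLen (S : Finset Pt) : Sym2 S → ℝ :=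
  Sym2.lift ⟨fun (a b : S) => dist (a : Pt) (b : Pt), fun a b => dist_comm (a : Pt) (b : Pt)⟩

/-- The edges of a graph on the points of `S`, as a finset. -/
noncomputable def edgesOf (S : Finset Pt) (T : SimpleGraph S) : Finset (Sym2 S) :=
  Finset.univ.filter (· ∈ T.edgeSet)

/-- The total Euclidean edge length of a graph on the points of `S`. -/
noncomputable def treeCost (S : Finset Pt) (T : SimpleGraph S) : ℝ :=
  ∑ e ∈ edgesOf S T, edgeLen S e

section Helpers

open SimpleGraph

variable {V : Type*}


lemma reach_of_adj_reach {G H : SimpleGraph V}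
    (h : ∀ u v, G.Adj u v → H.Reachable u v) {u v : V} (hr : G.Reachable u v) :
    H.Reachable u v := by
  obtain ⟨w⟩ := hr
  induction w with
  | nil => exact Reachable.refl _
  | cons ha _ ih => exact (h _ _ ha).trans ih

lemma reach_decomp {G H : SimpleGraph V} {x y : V}
    (hedge : ∀ u v, H.Adj u v → G.Adj u v ∨ s(u, v) = s(x, y))
    {u v : V} (hr : H.Reachable u v) :
    G.Reachable u v ∨ (G.Reachable u x ∧ G.Reachable y v) ∨
      (G.Reachable u y ∧ G.Reachable x v) := by
  obtain ⟨w⟩ := hr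
  induction w with
  | nil => exact Or.inl (Reachable.refl _)
  | @cons u w v ha p ih =>
    rcases hedge _ _ ha with hG | hxy
    · rcases ih with h | ⟨h1, h2⟩ | ⟨h1, h2⟩
      · exact Or.inl (hG.reachable.trans h)
      · exact Or.inr (Or.inl ⟨hG.reachable.trans h1, h2⟩)
      · exact Or.inr (Or.inr ⟨hG.reachable.trans h1, h2⟩)
    · rw [Sym2.eq_iff] at hxy
      rcases hxy with ⟨hu, hw⟩ | ⟨hu, hw⟩
      · subst hu; subst hw
        rcases ih with h | ⟨h1, h2⟩ | ⟨h1, h2⟩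
        · exact Or.inr (Or.inl ⟨Reachable.refl _, h⟩)
        · exact Or.inl (h1.symm.trans h2)
        · exact Or.inl h2
      · subst hu; subst hw
        rcases ih with h | ⟨h1, h2⟩ | ⟨h1, h2⟩
        · exact Or.inr (Or.inr ⟨Reachable.refl _, h⟩)
        · exact Or.inl h2
        · exact Or.inl (h1.symm.trans h2)

lemma card_cc_sup_edge [Fintype V] (G : SimpleGraph V) (a b : V)
    (hab : a ≠ b) (hnr : ¬ G.Reachable a b) :
    Nat.card (G ⊔ fromEdgeSet {s(a, b)}).ConnectedComponent + 1 =
      Nat.card G.ConnectedComponent := by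
  set H := G ⊔ fromEdgeSet {s(a, b)} with hH
  have hedge : ∀ u v, H.Adj u v → G.Adj u v ∨ s(u, v) = s(a, b) := by
    intro u v huv
    rcases huv with h | h
    · exact Or.inl h
    · rw [fromEdgeSet_adj] at h
      exact Or.inr h.1
  set g : V → G.ConnectedComponent :=
    fun v => if G.Reachable v b then G.connectedComponentMk a
      else G.connectedComponentMk v with hg
  have hgadj : ∀ u v, H.Adj u v → g u = g v := by
    intro u v huv
    rcases hedge _ _ huv with hG | hxy
    · by_cases hub : G.Reachable u b
      · have hvb : G.Reachable v b := hG.symm.reachable.trans hub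
        simp [hg, hub, hvb]
      · have hvb : ¬ G.Reachable v b := fun h => hub (hG.reachable.trans h)
        simp only [hg, hub, hvb, if_neg, if_false]
        exact ConnectedComponent.sound hG.reachable
    · rw [Sym2.eq_iff] at hxy
      rcases hxy with ⟨hu, hv⟩ | ⟨hu, hv⟩
      · subst hu; subst hv
        simp [hg, hnr, Reachable.refl]
      · subst hu; subst hv
        simp [hg, hnr, Reachable.refl]
  have hgr : ∀ u v, H.Reachable u v → g u = g v := by
    intro u v hr
    obtain ⟨w⟩ := hr
    induction w with
    | nil => rfl
    | cons ha _ ih => exact (hgadj _ _ ha).trans ih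
  set ψ : H.ConnectedComponent → G.ConnectedComponent :=
    Quot.lift g (fun u v h => hgr u v h) with hψ
  have hψmk : ∀ v, ψ (H.connectedComponentMk v) = g v := fun _ => rfl
  have hbne : ∀ c, ψ c ≠ G.connectedComponentMk b := by
    intro c
    induction c using SimpleGraph.ConnectedComponent.ind with
    | _ v =>
      rw [hψmk]
      by_cases hvb : G.Reachable v b
      · simp only [hg, hvb, if_pos]
        exact fun h => hnr (ConnectedComponent.exact h)
      · simp only [hg, hvb, if_neg, if_false]
        exact fun h => hvb (ConnectedComponent.exact h)
  have hGH : G ≤ H := le_sup_left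
  have hinj : Function.Injective (fun c => (⟨ψ c, hbne c⟩ :
      {c : G.ConnectedComponent // c ≠ G.connectedComponentMk b})) := by
    intro c1 c2 h
    simp only [Subtype.mk.injEq] at h
    induction c1 using SimpleGraph.ConnectedComponent.ind with
    | _ u =>
    induction c2 using SimpleGraph.ConnectedComponent.ind with
    | _ v =>
      rw [hψmk, hψmk] at h
      rw [ConnectedComponent.eq]
      have hedgeadj : H.Adj a b := by
        refine Or.inr ?_
        rw [fromEdgeSet_adj]
        exact ⟨rfl, hab⟩
      by_cases hub : G.Reachable u b <;> by_cases hvb : G.Reachable v b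
      · exact ((hub.mono hGH).trans (hvb.mono hGH).symm)
      · simp only [hg, hub, hvb, if_pos, if_neg, if_false] at h
        have : G.Reachable a v := ConnectedComponent.exact h
        exact ((hub.mono hGH).trans (hedgeadj.symm.reachable)).trans (this.mono hGH)
      · simp only [hg, hub, hvb, if_pos, if_neg, if_false] at h
        have : G.Reachable u a := ConnectedComponent.exact h
        exact (this.mono hGH).trans (hedgeadj.reachable.trans (hvb.mono hGH).symm)
      · simp only [hg, hub, hvb, if_neg, if_false] at h
        exact (ConnectedComponent.exact h).mono hGH
  have hsurj : Function.Surjective (fun c => (⟨ψ c, hbne c⟩ :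
      {c : G.ConnectedComponent // c ≠ G.connectedComponentMk b})) := by
    rintro ⟨c, hc⟩
    induction c using SimpleGraph.ConnectedComponent.ind with
    | _ v =>
      have hvb : ¬ G.Reachable v b := fun h => hc (ConnectedComponent.sound h)
      refine ⟨H.connectedComponentMk v, ?_⟩
      apply Subtype.ext
      simp only [hψmk, hg, hvb, if_neg, if_false]
  have e := Equiv.ofBijective _ ⟨hinj, hsurj⟩
  have h1 : Nat.card H.ConnectedComponent =
      Nat.card {c : G.ConnectedComponent // c ≠ G.connectedComponentMk b} :=
    Nat.card_congr e
  haveI : Fintype G.ConnectedComponent := Fintype.ofFinite _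
  have h2 : Fintype.card {c : G.ConnectedComponent // c ≠ G.connectedComponentMk b} + 1 =
      Fintype.card G.ConnectedComponent := by
    have hpos : 0 < Fintype.card G.ConnectedComponent :=
      Fintype.card_pos_iff.mpr ⟨G.connectedComponentMk b⟩
    rw [Fintype.card_subtype_compl, Fintype.card_subtype_eq]
    omega
  rw [h1, Nat.card_eq_fintype_card, Nat.card_eq_fintype_card]
  exact h2

lemma card_cc_bot [Fintype V] :
    Nat.card (⊥ : SimpleGraph V).ConnectedComponent = Fintype.card V := by
  have hbij : Function.Bijective (⊥ : SimpleGraph V).connectedComponentMk := by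
    constructor
    · intro u v h
      exact reachable_bot.mp (ConnectedComponent.exact h)
    · intro c
      induction c using SimpleGraph.ConnectedComponent.ind with
      | _ v => exact ⟨v, rfl⟩
  rw [← Nat.card_eq_fintype_card]
  exact (Nat.card_congr (Equiv.ofBijective _ hbij)).symm

lemma card_cc_eq_of_reach {G H : SimpleGraph V}
    (h : ∀ u v, G.Reachable u v ↔ H.Reachable u v) :
    Nat.card G.ConnectedComponent = Nat.card H.ConnectedComponent :=
  Nat.card_congr (Quot.congrRight h)

lemma card_cc_fromEdgeSet [Fintype V] {T : SimpleGraph V} (hT : T.IsTree)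
    (s : Finset (Sym2 V)) (hs : ↑s ⊆ T.edgeSet) :
    Nat.card (fromEdgeSet (↑s : Set (Sym2 V))).ConnectedComponent + s.card =
      Fintype.card V := by
  induction s using Finset.induction with
  | empty => simpa [fromEdgeSet_empty] using card_cc_bot (V := V)
  | @insert e s he ih =>
    induction e using Sym2.ind with
    | _ x y =>
    have hs' : (↑s : Set (Sym2 V)) ⊆ T.edgeSet := by
      intro f hf
      exact hs (by simp [hf])
    have hxyT : s(x, y) ∈ T.edgeSet := hs (by simp)
    have hadj : T.Adj x y := hxyT
    have hne : x ≠ y := hadj.ne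
    have hFle : fromEdgeSet (↑s : Set (Sym2 V)) ≤ T := by
      have := fromEdgeSet_mono hs'
      rwa [fromEdgeSet_edgeSet] at this
    have hnr : ¬ (fromEdgeSet (↑s : Set (Sym2 V))).Reachable x y := by
      rintro ⟨w⟩
      have hwedges : ∀ f ∈ w.edges, f ∈ T.edgeSet := by
        intro f hf
        exact edgeSet_subset_edgeSet.mpr hFle (w.edges_subset_edgeSet hf)
      set w' := w.transfer T hwedges with hw'
      have huniq := hT.IsAcyclic.path_unique w'.toPath (SimpleGraph.Path.singleton hadj)
      have hmem : s(x, y) ∈ (w'.toPath : T.Walk x y).edges := by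
        rw [huniq]
        simp [SimpleGraph.Path.singleton]
      have hmem2 : s(x, y) ∈ w.edges := by
        have := w'.edges_toPath_subset hmem
        rwa [SimpleGraph.Walk.edges_transfer] at this
      have := w.edges_subset_edgeSet hmem2
      rw [edgeSet_fromEdgeSet] at this
      exact he (by simpa [hne] using this.1)
    have hmerge := card_cc_sup_edge (fromEdgeSet (↑s : Set (Sym2 V))) x y hne hnr
    have hins : fromEdgeSet (↑(insert s(x, y) s) : Set (Sym2 V)) =
        fromEdgeSet (↑s : Set (Sym2 V)) ⊔ fromEdgeSet {s(x, y)} := by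
      rw [Finset.coe_insert, Set.insert_eq, fromEdgeSet_union, sup_comm]
    rw [hins, Finset.card_insert_of_notMem he]
    have := ih hs'
    omega



lemma cycle_prop (A : Finset Pt) (T : SimpleGraph A) (hT : T.IsTree)
    (hmin : ∀ T' : SimpleGraph A, T'.IsTree → treeCost A T ≤ treeCost A T')
    {u v : A} (hne : u ≠ v) (p : T.Walk u v) (hp : p.IsPath)
    {e : Sym2 A} (he : e ∈ p.edges) : edgeLen A e ≤ dist (u : Pt) (v : Pt) := by
  induction e using Sym2.ind with
  | _ x y =>
  by_contra hgt
  push_neg at hgt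
  have hlen : edgeLen A s(x, y) = dist (x : Pt) (y : Pt) := rfl
  have hdistlt : dist (u : Pt) (v : Pt) < dist (x : Pt) (y : Pt) := by rwa [hlen] at hgt
  have heT : s(x, y) ∈ T.edgeSet := p.edges_subset_edgeSet he
  have hadjxy : T.Adj x y := heT
  have hxy : x ≠ y := hadjxy.ne
  have hsuv : s(u, v) ∉ T.edgeSet := by
    intro hmem
    have hadj : T.Adj u v := hmem
    have huniq : (⟨p, hp⟩ : T.Path u v) = SimpleGraph.Path.singleton hadj :=
      hT.IsAcyclic.path_unique _ _
    have hpval : p = (SimpleGraph.Path.singleton hadj : T.Walk u v) :=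
      congrArg Subtype.val huniq
    rw [hpval] at he
    simp only [SimpleGraph.Path.singleton, SimpleGraph.Walk.edges_cons,
      SimpleGraph.Walk.edges_nil, List.mem_singleton] at he
    rw [Sym2.eq_iff] at he
    rcases he with ⟨h1, h2⟩ | ⟨h1, h2⟩
    · subst h1; subst h2; exact lt_irrefl _ hdistlt
    · subst h1; subst h2
      rw [dist_comm (x : Pt) (y : Pt)] at hdistlt
      exact lt_irrefl _ hdistlt
  set D := T.deleteEdges {s(x, y)} with hD
  have hDle : D ≤ T := by
    intro a b hab
    exact hab.1
  have hND : ¬ D.Reachable u v := by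
    rintro ⟨w⟩
    have hw : ∀ f ∈ w.edges, f ∈ T.edgeSet := fun f hf =>
      edgeSet_subset_edgeSet.mpr hDle (w.edges_subset_edgeSet hf)
    have huniq : (w.transfer T hw).toPath = (⟨p, hp⟩ : T.Path u v) :=
      hT.IsAcyclic.path_unique _ _
    have hmem : s(x, y) ∈ ((w.transfer T hw).toPath : T.Walk u v).edges := by
      rw [huniq]; exact he
    have hmem2 : s(x, y) ∈ w.edges := by
      have := (w.transfer T hw).edges_toPath_subset hmem
      rwa [SimpleGraph.Walk.edges_transfer] at this
    have := w.edges_subset_edgeSet hmem2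
    rw [hD, edgeSet_deleteEdges] at this
    exact this.2 rfl
  set T' := D ⊔ fromEdgeSet {s(u, v)} with hT'
  have hTadj' : T'.Adj u v := Or.inr ((fromEdgeSet_adj _).mpr ⟨rfl, hne⟩)
  have hDT' : D ≤ T' := le_sup_left
  have hedgeT : ∀ a b : A, T.Adj a b → D.Adj a b ∨ s(a, b) = s(x, y) := by
    intro a b hab
    by_cases h : s(a, b) = s(x, y)
    · exact Or.inr h
    · exact Or.inl ⟨hab, fun hh => h ((SimpleGraph.fromEdgeSet_adj _).mp hh).1⟩
  have hdecomp : ∀ a b : A, T.Reachable a b → D.Reachable a b ∨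
      (D.Reachable a x ∧ D.Reachable y b) ∨ (D.Reachable a y ∧ D.Reachable x b) :=
    fun a b h => reach_decomp hedgeT h
  have hu : D.Reachable u x ∨ D.Reachable u y := by
    rcases hdecomp u x (hT.isConnected.preconnected u x) with h | ⟨h1, _⟩ | ⟨h1, _⟩
    · exact Or.inl h
    · exact Or.inl h1
    · exact Or.inr h1
  have hv : D.Reachable v x ∨ D.Reachable v y := by
    rcases hdecomp v x (hT.isConnected.preconnected v x) with h | ⟨h1, _⟩ | ⟨h1, _⟩
    · exact Or.inl h
    · exact Or.inl h1
    · exact Or.inr h1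
  have hxyu : T'.Reachable x u ∧ T'.Reachable y u := by
    rcases hu with hux | huy <;> rcases hv with hvx | hvy
    · exact absurd (hux.trans hvx.symm) hND
    · exact ⟨(hux.mono hDT').symm,
        ((hvy.mono hDT').symm.trans hTadj'.symm.reachable)⟩
    · exact ⟨((hvx.mono hDT').symm.trans hTadj'.symm.reachable),
        (huy.mono hDT').symm⟩
    · exact absurd (huy.trans hvy.symm) hND
  have hconn : T'.Connected := by
    rw [SimpleGraph.connected_iff]
    refine ⟨?_, hT.isConnected.nonempty⟩
    have key : ∀ a : A, T'.Reachable a u := by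
      intro a
      rcases hdecomp a u (hT.isConnected.preconnected a u) with h | ⟨h1, h2⟩ | ⟨h1, h2⟩
      · exact h.mono hDT'
      · exact (h1.mono hDT').trans hxyu.1
      · exact (h1.mono hDT').trans hxyu.2
    intro a b
    exact (key a).trans (key b).symm
  have hT'edge : ∀ f ∈ T'.edgeSet, f ∈ D.edgeSet ∨ f = s(u, v) := by
    intro f hf
    rw [hT', edgeSet_sup, edgeSet_fromEdgeSet] at hf
    rcases hf with h | h
    · exact Or.inl h
    · exact Or.inr h.1
  have hacyc : T'.IsAcyclic := by
    intro a c hc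
    by_cases hmem : s(u, v) ∈ c.edges
    · have hu_supp : u ∈ c.support := SimpleGraph.Walk.fst_mem_support_of_mem_edges c hmem
      have hcyc' : (c.rotate u hu_supp).IsCycle := hc.rotate hu_supp
      have hmem' : s(u, v) ∈ (c.rotate u hu_supp).edges :=
        (c.rotate_edges u hu_supp).mem_iff.mpr hmem
      have hv_supp : v ∈ (c.rotate u hu_supp).support :=
        SimpleGraph.Walk.snd_mem_support_of_mem_edges _ hmem'
      set c' := c.rotate u hu_supp with hc'def
      set q1 := c'.takeUntil v hv_supp with hq1
      set q2 := c'.dropUntil v hv_supp with hq2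
      have hspec : q1.append q2 = c' := c'.take_spec hv_supp
      have hnodup : (q1.edges ++ q2.edges).Nodup := by
        have h1 := hcyc'.edges_nodup
        rw [← hspec, SimpleGraph.Walk.edges_append] at h1
        exact h1
      have hdisj := List.disjoint_of_nodup_append hnodup
      have hDreach : D.Reachable u v := by
        by_cases h1 : s(u, v) ∈ q1.edges
        · have havoid : ∀ f ∈ q2.edges, f ∈ D.edgeSet := by
            intro f hf
            rcases hT'edge f (q2.edges_subset_edgeSet hf) with h | h
            · exact h
            · exact absurd hf (by rw [h]; exact fun hmem2 => hdisj h1 hmem2)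
          exact ((q2.transfer D havoid).reachable).symm
        · have h2 : s(u, v) ∈ q2.edges := by
            have h3 : s(u, v) ∈ c'.edges := hmem'
            rw [← hspec, SimpleGraph.Walk.edges_append, List.mem_append] at h3
            tauto
          have havoid : ∀ f ∈ q1.edges, f ∈ D.edgeSet := by
            intro f hf
            rcases hT'edge f (q1.edges_subset_edgeSet hf) with h | h
            · exact h
            · exact absurd (h ▸ hf) h1
          exact (q1.transfer D havoid).reachable
      exact hND hDreach
    · have havoid : ∀ f ∈ c.edges, f ∈ D.edgeSet := by
        intro f hf
        rcases hT'edge f (c.edges_subset_edgeSet hf) with h | h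
        · exact h
        · exact absurd (h ▸ hf) hmem
      have hcD := hc.transfer havoid
      have hTedges : ∀ f ∈ (c.transfer D havoid).edges, f ∈ T.edgeSet := by
        rw [SimpleGraph.Walk.edges_transfer]
        intro f hf
        exact edgeSet_subset_edgeSet.mpr hDle (havoid f hf)
      exact hT.IsAcyclic _ (hcD.transfer hTedges)
  have hT'tree : T'.IsTree := ⟨hconn, hacyc⟩
  have hT'edgeSet : T'.edgeSet = (T.edgeSet \ {s(x, y)}) ∪ {s(u, v)} := by
    rw [hT', edgeSet_sup, hD, edgeSet_deleteEdges, edgeSet_fromEdgeSet]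
    congr 1
    ext f
    simp only [Set.mem_diff, Set.mem_singleton_iff, Set.mem_setOf_eq]
    constructor
    · exact fun h => h.1
    · intro h
      subst h
      exact ⟨rfl, by simp [hne]⟩
  have hEdgesOf : edgesOf A T' = insert s(u, v) ((edgesOf A T).erase s(x, y)) := by
    ext f
    simp only [edgesOf, Finset.mem_filter, Finset.mem_univ, true_and,
      Finset.mem_insert, Finset.mem_erase]
    rw [hT'edgeSet]
    simp only [Set.mem_union, Set.mem_diff, Set.mem_singleton_iff]
    tauto
  have hsnotin : s(u, v) ∉ (edgesOf A T).erase s(x, y) := by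
    intro h
    have := Finset.mem_of_mem_erase h
    simp only [edgesOf, Finset.mem_filter] at this
    exact hsuv this.2
  have hxyin : s(x, y) ∈ edgesOf A T := by
    simp only [edgesOf, Finset.mem_filter, Finset.mem_univ, true_and]
    exact heT
  have hcost : treeCost A T' =
      treeCost A T - edgeLen A s(x, y) + edgeLen A s(u, v) := by
    rw [treeCost, treeCost, hEdgesOf, Finset.sum_insert hsnotin]
    have := Finset.sum_erase_add (edgesOf A T) (edgeLen A) hxyin
    linarith
  have hle := hmin T' hT'tree
  have hlensuv : edgeLen A s(u, v) = dist (u : Pt) (v : Pt) := rfl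
  rw [hcost, hlensuv, hlen] at hle
  linarith

end Helpers

/-- Let `A ⊆ ℝ²` be finite with distinct pairwise distances and
`T` a Euclidean minimum spanning tree of `A`.  For every `r ≥ 0`, the number of
connected components of the graph on `A` with edges of length at most `2r` equals
`|A|` minus the number of MST edges of length at most `2r`; and the sum of the merge
radii (half the MST edge lengths) is half the total length of the MST. -/
theorem components_eq_card_sub_mst_edges (A : Finset Pt)
    (hgen : ∀ a ∈ A, ∀ b ∈ A, ∀ c ∈ A, ∀ d ∈ A,
      a ≠ b → c ≠ d → dist a b = dist c d → ({a, b} : Finset Pt) = {c, d})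
    (T : SimpleGraph A) (hT : T.IsTree)
    (hmin : ∀ T' : SimpleGraph A, T'.IsTree → treeCost A T ≤ treeCost A T') :
    (∀ r : ℝ, 0 ≤ r →
      Nat.card (SimpleGraph.fromRel
          (fun a b : A => dist (a : Pt) (b : Pt) ≤ 2 * r)).ConnectedComponent =
        A.card - ((edgesOf A T).filter (fun e => edgeLen A e ≤ 2 * r)).card) ∧
    ∑ e ∈ edgesOf A T, edgeLen A e / 2 = treeCost A T / 2 := by
  constructor
  · intro r hr
    classical
    set s := (edgesOf A T).filter (fun e => edgeLen A e ≤ 2 * r) with hsdef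
    have hs : (↑s : Set (Sym2 A)) ⊆ T.edgeSet := by
      intro f hf
      simp only [hsdef, Finset.coe_filter, Set.mem_setOf_eq] at hf
      have hf1 := hf.1
      simp only [edgesOf, Finset.mem_filter] at hf1
      exact hf1.2
    set F := SimpleGraph.fromEdgeSet (↑s : Set (Sym2 A)) with hF
    set Gr := SimpleGraph.fromRel
      (fun a b : A => dist (a : Pt) (b : Pt) ≤ 2 * r) with hGr
    have hFG : ∀ a b : A, F.Adj a b → Gr.Adj a b := by
      intro a b hab
      rw [hF, SimpleGraph.fromEdgeSet_adj] at hab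
      obtain ⟨hmem, hne⟩ := hab
      have : edgeLen A s(a, b) ≤ 2 * r := by
        have := hmem
        simp only [hsdef, Finset.coe_filter, Set.mem_setOf_eq] at this
        exact this.2
      exact ⟨hne, Or.inl this⟩
    have hGF : ∀ a b : A, Gr.Adj a b → F.Reachable a b := by
      intro a b hab
      obtain ⟨hne, hd⟩ := hab
      have hdist : dist (a : Pt) (b : Pt) ≤ 2 * r := by
        rcases hd with h | h
        · exact h
        · rwa [dist_comm]
      obtain ⟨w⟩ := hT.isConnected.preconnected a b
      have hp := w.toPath
      have hedges : ∀ f ∈ (w.toPath : T.Walk a b).edges, f ∈ F.edgeSet := by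
        intro f hf
        have hfT : f ∈ T.edgeSet := (w.toPath : T.Walk a b).edges_subset_edgeSet hf
        have hflen : edgeLen A f ≤ dist (a : Pt) (b : Pt) :=
          cycle_prop A T hT hmin hne (w.toPath : T.Walk a b) w.toPath.2 hf
        rw [hF, SimpleGraph.edgeSet_fromEdgeSet]
        refine ⟨?_, SimpleGraph.not_isDiag_of_mem_edgeSet T hfT⟩
        simp only [hsdef, Finset.coe_filter, Set.mem_setOf_eq, edgesOf,
          Finset.mem_filter, Finset.mem_univ, true_and]
        exact ⟨hfT, hflen.trans hdist⟩
      exact ((w.toPath : T.Walk a b).transfer F hedges).reachable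
    have hreach : ∀ a b : A, Gr.Reachable a b ↔ F.Reachable a b := by
      intro a b
      constructor
      · exact fun h => reach_of_adj_reach hGF h
      · exact fun h => reach_of_adj_reach (fun x y hxy => (hFG x y hxy).reachable) h
    have hcards := card_cc_fromEdgeSet hT s hs
    have hcardeq : Nat.card Gr.ConnectedComponent = Nat.card F.ConnectedComponent :=
      card_cc_eq_of_reach hreach
    rw [Fintype.card_coe] at hcards
    rw [hcardeq, hF]
    omega
  · rw [treeCost, Finset.sum_div]
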